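/- Let 𝔖 and 𝔖' be set association schemes on finite sets Ω and Ω'. Then the direct sum 𝔖 ⊕ 𝔖' is a set association scheme on the disjoint union Ω ⊔ Ω'; its rank equals rank(𝔖)·rank(𝔖'); and Aut(𝔖 ⊕ 𝔖') = Aut(𝔖) × Aut(𝔖'), i.e., a permutation of Ω ⊔ Ω' preserves every cell of 𝔖 ⊕ 𝔖' if and only if it maps Ω to Ω and Ω' to Ω' and restricts to an automorphism of 𝔖 on Ω and to an automorphism of 𝔖' on Ω'. -/

import Mathlib

namespace Paper


def IsTriangle {Ω : Type*} (a b c : Set Ω) : Prop :=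
  a ⊆ b ∪ c ∧ b ⊆ a ∪ c ∧ c ⊆ a ∪ b

noncomputable def tripleType {Ω : Type*} (a b c : Set Ω) : ℕ × ℕ × ℕ × ℕ × ℕ × ℕ × ℕ :=
  (a.ncard, b.ncard, c.ncard, (a ∩ b).ncard, (a ∩ c).ncard, (b ∩ c).ncard, (a ∩ b ∩ c).ncard)

noncomputable def typeCount {Ω : Type*} (β γ : Set (Set Ω)) (a : Set Ω) (τ : ℕ × ℕ × ℕ × ℕ × ℕ × ℕ × ℕ) : ℕ :=
  {p : Set Ω × Set Ω | p.1 ∈ β ∧ p.2 ∈ γ ∧ tripleType a p.1 p.2 = τ}.ncard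

def IsSAS {Ω : Type*} (S : Set (Set (Set Ω))) : Prop :=
  Setoid.IsPartition S ∧
  (∀ α ∈ S, ∀ a ∈ α, ∀ a' ∈ α, Set.ncard a = Set.ncard a') ∧
  (∀ α ∈ S, ∀ β ∈ S, ∀ γ ∈ S, ∀ a ∈ α, ∀ a' ∈ α,
    ∀ t₁ t₂ t₃ : Set Ω, IsTriangle t₁ t₂ t₃ →
      typeCount β γ a (tripleType t₁ t₂ t₃) = typeCount β γ a' (tripleType t₁ t₂ t₃))

def SetHomog {Ω : Type*} (S : Set (Set (Set Ω))) : Prop :=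
  {a : Set Ω | ∃ v : Ω, a = {v}} ∈ S

def setAutGroup {Ω : Type*} (S : Set (Set (Set Ω))) : Subgroup (Equiv.Perm Ω) where
  carrier := {π | ∀ α ∈ S, ∀ a : Set Ω, a ∈ α ↔ ⇑π '' a ∈ α}
  one_mem' := by intro α hα a; simp
  mul_mem' := by
    intro g h hg hh α hα a
    have h1 : ⇑(g * h) '' a = ⇑g '' (⇑h '' a) := by
      rw [Equiv.Perm.coe_mul, Set.image_comp]
    rw [h1]
    exact (hh α hα a).trans (hg α hα (⇑h '' a))
  inv_mem' := by
    intro g hg α hα a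
    have h0 := hg α hα (⇑g⁻¹ '' a)
    have h2 : ⇑g '' (⇑g⁻¹ '' a) = a := by
      simp [← Set.image_comp]
    rw [h2] at h0
    exact h0.symm

def SetSchurian {Ω : Type*} (S : Set (Set (Set Ω))) : Prop :=
  S = Set.range (fun a : Set Ω => {b : Set Ω | ∃ π ∈ setAutGroup S, b = ⇑π '' a})

def cellSum {Ω Ω' : Type*} (α : Set (Set Ω)) (α' : Set (Set Ω')) : Set (Set (Ω ⊕ Ω')) :=
  {s | ∃ a ∈ α, ∃ a' ∈ α', s = Sum.inl '' a ∪ Sum.inr '' a'}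

def directSum {Ω Ω' : Type*} (S : Set (Set (Set Ω))) (S' : Set (Set (Set Ω'))) :
    Set (Set (Set (Ω ⊕ Ω'))) :=
  {c | ∃ α ∈ S, ∃ α' ∈ S', c = cellSum α α'}

section helpers
variable {Ω Ω' : Type*}

def usum (a : Set Ω) (a' : Set Ω') : Set (Ω ⊕ Ω') := Sum.inl '' a ∪ Sum.inr '' a'

lemma preimage_inl_usum (a : Set Ω) (a' : Set Ω') : Sum.inl ⁻¹' (usum a a') = a := by
  simp [usum, Set.preimage_union, Set.preimage_image_eq _ Sum.inl_injective]

lemma preimage_inr_usum (a : Set Ω) (a' : Set Ω') : Sum.inr ⁻¹' (usum a a') = a' := by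
  simp [usum, Set.preimage_union, Set.preimage_image_eq _ Sum.inr_injective]

lemma usum_decomp (s : Set (Ω ⊕ Ω')) : usum (Sum.inl ⁻¹' s) (Sum.inr ⁻¹' s) = s :=
  Set.image_preimage_inl_union_image_preimage_inr s

lemma usum_inj {a b : Set Ω} {a' b' : Set Ω'} (h : usum a a' = usum b b') : a = b ∧ a' = b' := by
  constructor
  · rw [← preimage_inl_usum a a', h, preimage_inl_usum]
  · rw [← preimage_inr_usum a a', h, preimage_inr_usum]

lemma usum_inter (a b : Set Ω) (a' b' : Set Ω') :
    usum a a' ∩ usum b b' = usum (a ∩ b) (a' ∩ b') := by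
  ext x; cases x <;> simp [usum]

lemma usum_union (a b : Set Ω) (a' b' : Set Ω') :
    usum a a' ∪ usum b b' = usum (a ∪ b) (a' ∪ b') := by
  ext x; cases x <;> simp [usum]

lemma usum_subset {a b : Set Ω} {a' b' : Set Ω'} :
    usum a a' ⊆ usum b b' ↔ a ⊆ b ∧ a' ⊆ b' := by
  constructor
  · intro h
    constructor
    · intro x hx
      have := h (show Sum.inl x ∈ usum a a' by simp [usum, hx])
      simpa [usum] using this
    · intro x hx
      have := h (show Sum.inr x ∈ usum a a' by simp [usum, hx])
      simpa [usum] using this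
  · rintro ⟨h1, h2⟩ x hx
    rcases hx with ⟨y, hy, rfl⟩ | ⟨y, hy, rfl⟩
    · exact Or.inl ⟨y, h1 hy, rfl⟩
    · exact Or.inr ⟨y, h2 hy, rfl⟩

lemma ncard_usum [Finite Ω] [Finite Ω'] (a : Set Ω) (a' : Set Ω') :
    (usum a a').ncard = a.ncard + a'.ncard := by
  have hd : Disjoint (Sum.inl '' a) (Sum.inr '' a' : Set (Ω ⊕ Ω')) := by
    rw [Set.disjoint_left]
    rintro _ ⟨x, -, rfl⟩ ⟨y, -, h⟩
    exact Sum.inl_ne_inr h.symm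
  rw [usum, Set.ncard_union_eq hd (Set.toFinite _) (Set.toFinite _),
    Set.ncard_image_of_injective _ Sum.inl_injective,
    Set.ncard_image_of_injective _ Sum.inr_injective]

lemma tripleType_usum [Finite Ω] [Finite Ω'] (a b c : Set Ω) (a' b' c' : Set Ω') :
    tripleType (usum a a') (usum b b') (usum c c') =
      tripleType a b c + tripleType a' b' c' := by
  simp only [tripleType, usum_inter, ncard_usum, Prod.mk_add_mk]

lemma isTriangle_usum {a b c : Set Ω} {a' b' c' : Set Ω'} :
    IsTriangle (usum a a') (usum b b') (usum c c') ↔ IsTriangle a b c ∧ IsTriangle a' b' c' := by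
  simp only [IsTriangle, usum_union, usum_subset]
  tauto

lemma mem_cellSum_iff {α : Set (Set Ω)} {α' : Set (Set Ω')} {s : Set (Ω ⊕ Ω')} :
    s ∈ cellSum α α' ↔ Sum.inl ⁻¹' s ∈ α ∧ Sum.inr ⁻¹' s ∈ α' := by
  constructor
  · rintro ⟨a, ha, a', ha', rfl⟩
    rw [show Sum.inl '' a ∪ Sum.inr '' a' = usum a a' from rfl, preimage_inl_usum,
      preimage_inr_usum]
    exact ⟨ha, ha'⟩
  · rintro ⟨h1, h2⟩
    exact ⟨_, h1, _, h2, (usum_decomp s).symm⟩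

end helpers

def triP (τ : ℕ × ℕ × ℕ × ℕ × ℕ × ℕ × ℕ) : Prop :=
  τ.1 + τ.2.2.2.2.2.2 = τ.2.2.2.1 + τ.2.2.2.2.1 ∧
  τ.2.1 + τ.2.2.2.2.2.2 = τ.2.2.2.1 + τ.2.2.2.2.2.1 ∧
  τ.2.2.1 + τ.2.2.2.2.2.2 = τ.2.2.2.2.1 + τ.2.2.2.2.2.1

section tri
variable {Ω : Type*} [Finite Ω]

lemma subset_union_iff_ncard (a b c : Set Ω) :
    a ⊆ b ∪ c ↔ a.ncard + (a ∩ b ∩ c).ncard = (a ∩ b).ncard + (a ∩ c).ncard := by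
  have h1 : a ∩ (b ∪ c) = (a ∩ b) ∪ (a ∩ c) := Set.inter_union_distrib_left a b c
  have h2 : (a ∩ b) ∩ (a ∩ c) = a ∩ b ∩ c := by ext x; simp only [Set.mem_inter_iff]; tauto
  have h3 := Set.ncard_union_add_ncard_inter (a ∩ b) (a ∩ c) (Set.toFinite _) (Set.toFinite _)
  rw [h2] at h3
  have h4 : a ⊆ b ∪ c ↔ (a ∩ (b ∪ c)).ncard = a.ncard := by
    constructor
    · intro h; rw [Set.inter_eq_left.mpr h]
    · intro h
      rw [← Set.inter_eq_left]
      exact Set.eq_of_subset_of_ncard_le Set.inter_subset_left h.ge (Set.toFinite _)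
  rw [h4, ← h3, h1]
  omega

lemma isTriangle_iff_triP (a b c : Set Ω) :
    IsTriangle a b c ↔ triP (tripleType a b c) := by
  have e1 : b ∩ a = a ∩ b := Set.inter_comm b a
  have e3 : c ∩ a = a ∩ c := Set.inter_comm c a
  have e4 : c ∩ b = b ∩ c := Set.inter_comm c b
  have e5 : a ∩ c ∩ b = a ∩ b ∩ c := by
    ext x; simp only [Set.mem_inter_iff]; tauto
  constructor
  · rintro ⟨h1, h2, h3⟩
    rw [subset_union_iff_ncard] at h1 h2 h3
    rw [e1] at h2
    rw [e3, e4, e5] at h3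
    exact ⟨h1, h2, h3⟩
  · rintro ⟨h1, h2, h3⟩
    refine ⟨?_, ?_, ?_⟩ <;> rw [subset_union_iff_ncard]
    · exact h1
    · rw [e1]; exact h2
    · rw [e3, e4, e5]; exact h3

end tri

lemma ncard_fiber_eq {X Y : Type*} [Finite X] [Finite Y] (V W : Set (X × Y))
    (h : ∀ y : Y, {x | (x, y) ∈ V}.ncard = {x | (x, y) ∈ W}.ncard) :
    V.ncard = W.ncard := by
  classical
  have : Fintype X := Fintype.ofFinite X
  have : Fintype Y := Fintype.ofFinite Y
  have key : ∀ (U : Set (X × Y)), U.ncard = ∑ y : Y, {x | (x, y) ∈ U}.ncard := by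
    intro U
    rw [Set.ncard_eq_toFinset_card' U,
      Finset.card_eq_sum_card_fiberwise (f := Prod.snd) (t := Finset.univ)
        (fun p _ => Finset.mem_univ _)]
    refine Finset.sum_congr rfl (fun y _ => ?_)
    rw [Set.ncard_eq_toFinset_card']
    refine (Finset.card_nbij' (s := Finset.filter (fun a => a.2 = y) U.toFinset)
      (t := {x | (x, y) ∈ U}.toFinset) Prod.fst (fun x => (x, y)) ?_ ?_ ?_ ?_)
    · intro p hp
      simp only [Finset.coe_filter, Finset.mem_filter, Set.mem_toFinset, Set.mem_setOf_eq, Finset.mem_coe] at hp ⊢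
      have : p = (p.1, y) := by rw [← hp.2]
      show (p.1, y) ∈ U
      rw [← this]; exact hp.1
    · intro x hx
      simp only [Finset.coe_filter, Finset.mem_filter, Set.mem_toFinset, Set.mem_setOf_eq, Finset.mem_coe] at hx ⊢
      exact ⟨hx, trivial⟩
    · intro p hp
      simp only [Finset.coe_filter, Finset.mem_filter, Set.mem_toFinset, Set.mem_setOf_eq, Finset.mem_coe] at hp
      exact Prod.ext rfl hp.2.symm
    · intro x _
      rfl
  rw [key V, key W]
  exact Finset.sum_congr rfl (fun y _ => h y)

lemma ncard_fiber_eq' {X Y : Type*} [Finite X] [Finite Y] (V W : Set (X × Y))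
    (h : ∀ x : X, {y | (x, y) ∈ V}.ncard = {y | (x, y) ∈ W}.ncard) :
    V.ncard = W.ncard := by
  have hVs : V.ncard = (Prod.swap '' V).ncard :=
    (Set.ncard_image_of_injective V Prod.swap_injective).symm
  have hWs : W.ncard = (Prod.swap '' W).ncard :=
    (Set.ncard_image_of_injective W Prod.swap_injective).symm
  rw [hVs, hWs]
  refine ncard_fiber_eq _ _ (fun x => ?_)
  have e : ∀ (U : Set (X × Y)) (y : Y), ((y, x) ∈ Prod.swap '' U) ↔ (x, y) ∈ U := by
    intro U y
    constructor
    · rintro ⟨p, hp, he⟩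
      have : p = (x, y) := by
        have := Prod.ext_iff.1 he
        simp at this
        exact Prod.ext this.2 this.1
      rwa [this] at hp
    · intro hU; exact ⟨(x, y), hU, rfl⟩
  have e1 : {y | (y, x) ∈ Prod.swap '' V} = {y | (x, y) ∈ V} := by ext y; exact e V y
  have e2 : {y | (y, x) ∈ Prod.swap '' W} = {y | (x, y) ∈ W} := by ext y; exact e W y
  rw [e1, e2]
  exact h x
lemma ncard_prod_set {X Y : Type*} [Finite X] [Finite Y] (s : Set X) (t : Set Y) :
    (s ×ˢ t).ncard = s.ncard * t.ncard := by
  rw [← Nat.card_coe_set_eq, ← Nat.card_coe_set_eq, ← Nat.card_coe_set_eq,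
    Nat.card_congr (Equiv.Set.prod s t), Nat.card_prod]

lemma cell_nonempty {Ω : Type*} {S : Set (Set (Set Ω))} (hS : IsSAS S)
    {α : Set (Set Ω)} (hα : α ∈ S) : α.Nonempty := by
  rw [Set.nonempty_iff_ne_empty]
  rintro rfl
  exact hS.1.1 hα

lemma cell_unique {Ω : Type*} {S : Set (Set (Set Ω))} (hS : IsSAS S)
    {α β : Set (Set Ω)} (hα : α ∈ S) (hβ : β ∈ S) {a : Set Ω} (haα : a ∈ α) (haβ : a ∈ β) :
    α = β := by
  obtain ⟨δ, -, hu⟩ := hS.1.2 a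
  rw [hu α ⟨hα, haα⟩, hu β ⟨hβ, haβ⟩]

lemma empty_cell_mem {Ω : Type*} [Finite Ω] {S : Set (Set (Set Ω))} (hS : IsSAS S) :
    ({∅} : Set (Set Ω)) ∈ S := by
  obtain ⟨α₀, ⟨hα₀S, hmem⟩, -⟩ := hS.1.2 ∅
  have he : α₀ = {∅} := by
    ext x
    simp only [Set.mem_singleton_iff]
    constructor
    · intro hx
      have h := hS.2.1 α₀ hα₀S x hx ∅ hmem
      rw [Set.ncard_empty] at h
      exact (Set.ncard_eq_zero (Set.toFinite x)).1 h
    · rintro rfl; exact hmem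
  rwa [← he]
lemma fiber_count_eq {Ω : Type*} [Finite Ω] {S : Set (Set (Set Ω))} (hS : IsSAS S)
    {α β γ : Set (Set Ω)} (hα : α ∈ S) (hβ : β ∈ S) (hγ : γ ∈ S)
    {a a₂ : Set Ω} (ha : a ∈ α) (ha₂ : a₂ ∈ α) (ρ τ : ℕ × ℕ × ℕ × ℕ × ℕ × ℕ × ℕ)
    (hk : ∀ x b c : Set Ω, tripleType x b c + ρ = τ → IsTriangle x b c) :
    {p : Set Ω × Set Ω | p.1 ∈ β ∧ p.2 ∈ γ ∧ tripleType a p.1 p.2 + ρ = τ}.ncard =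
    {p : Set Ω × Set Ω | p.1 ∈ β ∧ p.2 ∈ γ ∧ tripleType a₂ p.1 p.2 + ρ = τ}.ncard := by
  have key : ∀ x y : Set Ω, x ∈ α → y ∈ α →
      ({p : Set Ω × Set Ω | p.1 ∈ β ∧ p.2 ∈ γ ∧ tripleType x p.1 p.2 + ρ = τ}).Nonempty →
      {p : Set Ω × Set Ω | p.1 ∈ β ∧ p.2 ∈ γ ∧ tripleType x p.1 p.2 + ρ = τ}.ncard =
      {p : Set Ω × Set Ω | p.1 ∈ β ∧ p.2 ∈ γ ∧ tripleType y p.1 p.2 + ρ = τ}.ncard := by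
    rintro x y hx hy ⟨⟨b, c⟩, hb, hc, hsum⟩
    have htri : IsTriangle x b c := hk x b c hsum
    have e1 : {p : Set Ω × Set Ω | p.1 ∈ β ∧ p.2 ∈ γ ∧ tripleType x p.1 p.2 + ρ = τ} =
        {p : Set Ω × Set Ω | p.1 ∈ β ∧ p.2 ∈ γ ∧ tripleType x p.1 p.2 = tripleType x b c} := by
      ext p
      simp only [Set.mem_setOf_eq]
      refine and_congr_right fun _ => and_congr_right fun _ => ?_
      constructor
      · intro h3; exact add_right_cancel (h3.trans hsum.symm)
      · intro h3; rw [h3]; exact hsum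
    have e2 : {p : Set Ω × Set Ω | p.1 ∈ β ∧ p.2 ∈ γ ∧ tripleType y p.1 p.2 + ρ = τ} =
        {p : Set Ω × Set Ω | p.1 ∈ β ∧ p.2 ∈ γ ∧ tripleType y p.1 p.2 = tripleType x b c} := by
      ext p
      simp only [Set.mem_setOf_eq]
      refine and_congr_right fun _ => and_congr_right fun _ => ?_
      constructor
      · intro h3; exact add_right_cancel (h3.trans hsum.symm)
      · intro h3; rw [h3]; exact hsum
    rw [e1, e2]
    exact hS.2.2 α hα β hβ γ hγ x hx y hy x b c htri
  rcases Set.eq_empty_or_nonempty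
      {p : Set Ω × Set Ω | p.1 ∈ β ∧ p.2 ∈ γ ∧ tripleType a p.1 p.2 + ρ = τ} with h1 | h1
  · rcases Set.eq_empty_or_nonempty
        {p : Set Ω × Set Ω | p.1 ∈ β ∧ p.2 ∈ γ ∧ tripleType a₂ p.1 p.2 + ρ = τ} with h2 | h2
    · rw [h1, h2]
    · exact (key a₂ a ha₂ ha h2).symm
  · exact key a a₂ ha ha₂ h1

lemma typeCount_cellSum {Ω Ω' : Type*} [Finite Ω] [Finite Ω']
    (β γ : Set (Set Ω)) (β' γ' : Set (Set Ω')) (x : Set Ω) (x' : Set Ω')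
    (τ : ℕ × ℕ × ℕ × ℕ × ℕ × ℕ × ℕ) :
    typeCount (cellSum β β') (cellSum γ γ') (usum x x') τ =
    {w : (Set Ω × Set Ω) × (Set Ω' × Set Ω') | w.1.1 ∈ β ∧ w.1.2 ∈ γ ∧ w.2.1 ∈ β' ∧
      w.2.2 ∈ γ' ∧ tripleType x w.1.1 w.1.2 + tripleType x' w.2.1 w.2.2 = τ}.ncard := by
  rw [typeCount]
  have himg : {p : Set (Ω ⊕ Ω') × Set (Ω ⊕ Ω') |
        p.1 ∈ cellSum β β' ∧ p.2 ∈ cellSum γ γ' ∧ tripleType (usum x x') p.1 p.2 = τ} =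
      (fun w : (Set Ω × Set Ω) × (Set Ω' × Set Ω') => (usum w.1.1 w.2.1, usum w.1.2 w.2.2)) ''
      {w : (Set Ω × Set Ω) × (Set Ω' × Set Ω') | w.1.1 ∈ β ∧ w.1.2 ∈ γ ∧ w.2.1 ∈ β' ∧
        w.2.2 ∈ γ' ∧ tripleType x w.1.1 w.1.2 + tripleType x' w.2.1 w.2.2 = τ} := by
    ext ⟨p, q⟩
    constructor
    · rintro ⟨hp, hq, ht⟩
      obtain ⟨b, hb, b', hb', rfl⟩ := hp
      obtain ⟨c, hc, c', hc', rfl⟩ := hq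
      refine ⟨((b, c), (b', c')), ⟨hb, hc, hb', hc', ?_⟩, rfl⟩
      rw [← tripleType_usum]
      exact ht
    · rintro ⟨⟨⟨b, c⟩, ⟨b', c'⟩⟩, ⟨hb, hc, hb', hc', hsum⟩, he⟩
      obtain ⟨he1, he2⟩ := Prod.ext_iff.1 he
      refine ⟨?_, ?_, ?_⟩
      · rw [← he1]; exact ⟨b, hb, b', hb', rfl⟩
      · rw [← he2]; exact ⟨c, hc, c', hc', rfl⟩
      · rw [← he1, ← he2]
        show tripleType (usum x x') (usum b b') (usum c c') = τ
        rw [tripleType_usum]; exact hsum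
  rw [himg, Set.ncard_image_of_injective]
  intro w w₂ he
  obtain ⟨h1, h2⟩ := Prod.ext_iff.1 he
  obtain ⟨e11, e21⟩ := usum_inj h1
  obtain ⟨e12, e22⟩ := usum_inj h2
  exact Prod.ext (Prod.ext e11 e12) (Prod.ext e21 e22)

lemma typeCount_directSum_eq {Ω Ω' : Type*} [Finite Ω] [Finite Ω']
    {S : Set (Set (Set Ω))} {S' : Set (Set (Set Ω'))} (hS : IsSAS S) (hS' : IsSAS S')
    {α β γ : Set (Set Ω)} (hα : α ∈ S) (hβ : β ∈ S) (hγ : γ ∈ S)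
    {α' β' γ' : Set (Set Ω')} (hα' : α' ∈ S') (hβ' : β' ∈ S') (hγ' : γ' ∈ S')
    {a a₂ : Set Ω} (ha : a ∈ α) (ha₂ : a₂ ∈ α)
    {a' a₂' : Set Ω'} (ha' : a' ∈ α') (ha₂' : a₂' ∈ α')
    {t₁ t₂ t₃ : Set (Ω ⊕ Ω')} (ht : IsTriangle t₁ t₂ t₃) :
    typeCount (cellSum β β') (cellSum γ γ') (usum a a') (tripleType t₁ t₂ t₃) =
    typeCount (cellSum β β') (cellSum γ γ') (usum a₂ a₂') (tripleType t₁ t₂ t₃) := by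
  set τ := tripleType t₁ t₂ t₃ with hτdef
  have hPτ : triP τ := (isTriangle_iff_triP t₁ t₂ t₃).1 ht
  have hdet : ∀ (x : Set Ω) (x' : Set Ω') (b c : Set Ω) (b' c' : Set Ω'),
      tripleType x b c + tripleType x' b' c' = τ →
      IsTriangle x b c ∧ IsTriangle x' b' c' := by
    intro x x' b c b' c' hsum
    have hP : triP (tripleType (usum x x') (usum b b') (usum c c')) := by
      rw [tripleType_usum, hsum]; exact hPτ
    exact isTriangle_usum.1 ((isTriangle_iff_triP _ _ _).2 hP)
  rw [typeCount_cellSum, typeCount_cellSum]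
  have step1 : ∀ z z₂ : Set Ω, z ∈ α → z₂ ∈ α → ∀ z' : Set Ω',
      {w : (Set Ω × Set Ω) × (Set Ω' × Set Ω') | w.1.1 ∈ β ∧ w.1.2 ∈ γ ∧ w.2.1 ∈ β' ∧
        w.2.2 ∈ γ' ∧ tripleType z w.1.1 w.1.2 + tripleType z' w.2.1 w.2.2 = τ}.ncard =
      {w : (Set Ω × Set Ω) × (Set Ω' × Set Ω') | w.1.1 ∈ β ∧ w.1.2 ∈ γ ∧ w.2.1 ∈ β' ∧
        w.2.2 ∈ γ' ∧ tripleType z₂ w.1.1 w.1.2 + tripleType z' w.2.1 w.2.2 = τ}.ncard := by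
    intro z z₂ hz hz₂ z'
    refine ncard_fiber_eq _ _ (fun y => ?_)
    by_cases hy : y.1 ∈ β' ∧ y.2 ∈ γ'
    · have e : ∀ u : Set Ω,
          {p : Set Ω × Set Ω | (p, y) ∈ {w : (Set Ω × Set Ω) × (Set Ω' × Set Ω') |
            w.1.1 ∈ β ∧ w.1.2 ∈ γ ∧ w.2.1 ∈ β' ∧ w.2.2 ∈ γ' ∧
            tripleType u w.1.1 w.1.2 + tripleType z' w.2.1 w.2.2 = τ}} =
          {p : Set Ω × Set Ω | p.1 ∈ β ∧ p.2 ∈ γ ∧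
            tripleType u p.1 p.2 + tripleType z' y.1 y.2 = τ} := by
        intro u
        ext p
        simp only [Set.mem_setOf_eq]
        tauto
      rw [e z, e z₂]
      exact fiber_count_eq hS hα hβ hγ hz hz₂ _ τ
        (fun x b c hsum => (hdet x z' b c y.1 y.2 hsum).1)
    · have e : ∀ u : Set Ω,
          {p : Set Ω × Set Ω | (p, y) ∈ {w : (Set Ω × Set Ω) × (Set Ω' × Set Ω') |
            w.1.1 ∈ β ∧ w.1.2 ∈ γ ∧ w.2.1 ∈ β' ∧ w.2.2 ∈ γ' ∧
            tripleType u w.1.1 w.1.2 + tripleType z' w.2.1 w.2.2 = τ}} = ∅ := by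
        intro u
        ext p
        simp only [Set.mem_setOf_eq, Set.mem_empty_iff_false, iff_false]
        rintro ⟨-, -, h3, h4, -⟩
        exact hy ⟨h3, h4⟩
      rw [e z, e z₂]
  have step2 : ∀ z : Set Ω, ∀ z' z₂' : Set Ω', z' ∈ α' → z₂' ∈ α' →
      {w : (Set Ω × Set Ω) × (Set Ω' × Set Ω') | w.1.1 ∈ β ∧ w.1.2 ∈ γ ∧ w.2.1 ∈ β' ∧
        w.2.2 ∈ γ' ∧ tripleType z w.1.1 w.1.2 + tripleType z' w.2.1 w.2.2 = τ}.ncard =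
      {w : (Set Ω × Set Ω) × (Set Ω' × Set Ω') | w.1.1 ∈ β ∧ w.1.2 ∈ γ ∧ w.2.1 ∈ β' ∧
        w.2.2 ∈ γ' ∧ tripleType z w.1.1 w.1.2 + tripleType z₂' w.2.1 w.2.2 = τ}.ncard := by
    intro z z' z₂' hz' hz₂'
    refine ncard_fiber_eq' _ _ (fun x => ?_)
    by_cases hx : x.1 ∈ β ∧ x.2 ∈ γ
    · have e : ∀ u : Set Ω',
          {p : Set Ω' × Set Ω' | (x, p) ∈ {w : (Set Ω × Set Ω) × (Set Ω' × Set Ω') |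
            w.1.1 ∈ β ∧ w.1.2 ∈ γ ∧ w.2.1 ∈ β' ∧ w.2.2 ∈ γ' ∧
            tripleType z w.1.1 w.1.2 + tripleType u w.2.1 w.2.2 = τ}} =
          {p : Set Ω' × Set Ω' | p.1 ∈ β' ∧ p.2 ∈ γ' ∧
            tripleType u p.1 p.2 + tripleType z x.1 x.2 = τ} := by
        intro u
        ext p
        simp only [Set.mem_setOf_eq]
        rw [add_comm (tripleType u p.1 p.2)]
        tauto
      rw [e z', e z₂']
      exact fiber_count_eq hS' hα' hβ' hγ' hz' hz₂' _ τ
        (fun x' b' c' hsum => (hdet z x' x.1 x.2 b' c' (by rw [add_comm]; exact hsum)).2)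
    · have e : ∀ u : Set Ω',
          {p : Set Ω' × Set Ω' | (x, p) ∈ {w : (Set Ω × Set Ω) × (Set Ω' × Set Ω') |
            w.1.1 ∈ β ∧ w.1.2 ∈ γ ∧ w.2.1 ∈ β' ∧ w.2.2 ∈ γ' ∧
            tripleType z w.1.1 w.1.2 + tripleType u w.2.1 w.2.2 = τ}} = ∅ := by
        intro u
        ext p
        simp only [Set.mem_setOf_eq, Set.mem_empty_iff_false, iff_false]
        rintro ⟨h1, h2, -, -, -⟩
        exact hx ⟨h1, h2⟩
      rw [e z', e z₂']
  exact (step1 a a₂ ha ha₂ a').trans (step2 a₂ a' a₂' ha' ha₂')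
theorem stmt9 {Ω Ω' : Type*} [Finite Ω] [Finite Ω']
    (S : Set (Set (Set Ω))) (S' : Set (Set (Set Ω')))
    (hS : IsSAS S) (hS' : IsSAS S') :
    IsSAS (directSum S S') ∧
    (directSum S S').ncard = S.ncard * S'.ncard ∧
    (∀ g : Equiv.Perm (Ω ⊕ Ω'),
      g ∈ setAutGroup (directSum S S') ↔
      ∃ f ∈ setAutGroup S, ∃ f' ∈ setAutGroup S', g = Equiv.sumCongr f f') := by
  refine ⟨⟨⟨?_, ?_⟩, ?_, ?_⟩, ?_, ?_⟩
  -- ∅ ∉ directSum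
  · rintro ⟨α, hα, α', hα', heq⟩
    obtain ⟨a, ha⟩ := cell_nonempty hS hα
    obtain ⟨a', ha'⟩ := cell_nonempty hS' hα'
    have : usum a a' ∈ cellSum α α' := ⟨a, ha, a', ha', rfl⟩
    rw [← heq] at this
    exact this
  -- existence and uniqueness of cells
  · intro s
    obtain ⟨α, ⟨hαS, hmemα⟩, huα⟩ := hS.1.2 (Sum.inl ⁻¹' s)
    obtain ⟨α', ⟨hα'S, hmemα'⟩, huα'⟩ := hS'.1.2 (Sum.inr ⁻¹' s)
    refine ⟨cellSum α α', ⟨⟨α, hαS, α', hα'S, rfl⟩, mem_cellSum_iff.2 ⟨hmemα, hmemα'⟩⟩, ?_⟩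
    rintro c ⟨⟨β, hβ, β', hβ', rfl⟩, hsc⟩
    rw [mem_cellSum_iff] at hsc
    rw [huα β ⟨hβ, hsc.1⟩, huα' β' ⟨hβ', hsc.2⟩]
  -- cardinality
  · rintro cell ⟨α, hα, α', hα', rfl⟩ s hs s₂ hs₂
    obtain ⟨a, ha, a', ha', rfl⟩ := hs
    obtain ⟨a₂, ha₂, a₂', ha₂', rfl⟩ := hs₂
    show (usum a a').ncard = (usum a₂ a₂').ncard
    rw [ncard_usum, ncard_usum, hS.2.1 α hα a ha a₂ ha₂, hS'.2.1 α' hα' a' ha' a₂' ha₂']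
  -- triangle counts
  · rintro A ⟨α, hα, α', hα', rfl⟩ B ⟨β, hβ, β', hβ', rfl⟩ C ⟨γ, hγ, γ', hγ', rfl⟩
      s ⟨a, ha, a', ha', rfl⟩ s₂ ⟨a₂, ha₂, a₂', ha₂', rfl⟩ t₁ t₂ t₃ ht
    exact typeCount_directSum_eq hS hS' hα hβ hγ hα' hβ' hγ' ha ha₂ ha' ha₂' ht
  -- rank
  · have himg : directSum S S' =
        (fun q : Set (Set Ω) × Set (Set Ω') => cellSum q.1 q.2) '' (S ×ˢ S') := by
      ext c
      constructor
      · rintro ⟨α, hα, α', hα', rfl⟩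
        exact ⟨(α, α'), ⟨hα, hα'⟩, rfl⟩
      · rintro ⟨⟨α, α'⟩, ⟨hα, hα'⟩, rfl⟩
        exact ⟨α, hα, α', hα', rfl⟩
    rw [himg, Set.ncard_image_of_injOn, ncard_prod_set]
    rintro ⟨α, α'⟩ ⟨hα, hα'⟩ ⟨β, β'⟩ ⟨hβ, hβ'⟩ he
    simp only at he
    obtain ⟨a, ha⟩ := cell_nonempty hS hα
    obtain ⟨a', ha'⟩ := cell_nonempty hS' hα'
    have hmem : usum a a' ∈ cellSum β β' := he ▸ ⟨a, ha, a', ha', rfl⟩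
    rw [mem_cellSum_iff, preimage_inl_usum, preimage_inr_usum] at hmem
    have e1 : α = β := cell_unique hS hα hβ ha hmem.1
    have e2 : α' = β' := cell_unique hS' hα' hβ' ha' hmem.2
    rw [Prod.ext_iff]
    exact ⟨e1, e2⟩
  -- automorphism group
  · intro g
    have hmemS0 : ({∅} : Set (Set Ω)) ∈ S := empty_cell_mem hS
    have hmemS0' : ({∅} : Set (Set Ω')) ∈ S' := empty_cell_mem hS'
    constructor
    · intro hg
      have hgm : ∀ c ∈ directSum S S', ∀ s : Set (Ω ⊕ Ω'), s ∈ c ↔ ⇑g '' s ∈ c := hg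
      have hgi : g⁻¹ ∈ setAutGroup (directSum S S') := (setAutGroup (directSum S S')).inv_mem hg
      have hgmi : ∀ c ∈ directSum S S', ∀ s : Set (Ω ⊕ Ω'), s ∈ c ↔ ⇑g⁻¹ '' s ∈ c := hgi
      -- the image of a left point is a left point
      have hpt : ∀ (h : Equiv.Perm (Ω ⊕ Ω')),
          (∀ c ∈ directSum S S', ∀ s : Set (Ω ⊕ Ω'), s ∈ c ↔ ⇑h '' s ∈ c) →
          ∀ x : Ω, ∃ w : Ω, h (Sum.inl x) = Sum.inl w := by
        intro h hh x
        obtain ⟨α, ⟨hαS, hmem⟩, -⟩ := hS.1.2 {x}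
        have hcell : cellSum α {∅} ∈ directSum S S' := ⟨α, hαS, {∅}, hmemS0', rfl⟩
        have h1 : ({Sum.inl x} : Set (Ω ⊕ Ω')) ∈ cellSum α {∅} := by
          refine ⟨{x}, hmem, ∅, rfl, ?_⟩
          simp
        have h2 := (hh _ hcell _).1 h1
        rw [Set.image_singleton] at h2
        obtain ⟨b, -, b', hb', heq⟩ := h2
        rw [Set.mem_singleton_iff] at hb'
        subst hb'
        have h3 : h (Sum.inl x) ∈ Sum.inl '' b ∪ Sum.inr '' (∅ : Set Ω') := by
          rw [← heq]; exact rfl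
        rcases h3 with ⟨w, -, hw⟩ | ⟨w, hw, -⟩
        · exact ⟨w, hw.symm⟩
        · exact absurd hw (Set.notMem_empty w)
      have hpt' : ∀ (h : Equiv.Perm (Ω ⊕ Ω')),
          (∀ c ∈ directSum S S', ∀ s : Set (Ω ⊕ Ω'), s ∈ c ↔ ⇑h '' s ∈ c) →
          ∀ x : Ω', ∃ w : Ω', h (Sum.inr x) = Sum.inr w := by
        intro h hh x
        obtain ⟨α', ⟨hα'S, hmem⟩, -⟩ := hS'.1.2 {x}
        have hcell : cellSum {∅} α' ∈ directSum S S' := ⟨{∅}, hmemS0, α', hα'S, rfl⟩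
        have h1 : ({Sum.inr x} : Set (Ω ⊕ Ω')) ∈ cellSum {∅} α' := by
          refine ⟨∅, rfl, {x}, hmem, ?_⟩
          simp
        have h2 := (hh _ hcell _).1 h1
        rw [Set.image_singleton] at h2
        obtain ⟨b, hb, b', hb', heq⟩ := h2
        rw [Set.mem_singleton_iff] at hb
        subst hb
        have h3 : h (Sum.inr x) ∈ Sum.inl '' (∅ : Set Ω) ∪ Sum.inr '' b' := by
          rw [← heq]; exact rfl
        rcases h3 with ⟨w, hw, -⟩ | ⟨w, -, hw⟩
        · exact absurd hw (Set.notMem_empty w)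
        · exact ⟨w, hw.symm⟩
      choose fl hfl using hpt g hgm
      choose fr hfr using hpt' g hgm
      choose gl hgl using hpt g⁻¹ hgmi
      choose gr hgr using hpt' g⁻¹ hgmi
      have hlinv : Function.LeftInverse gl fl := by
        intro x
        apply Sum.inl_injective
        rw [← hgl (fl x), ← hfl x, Equiv.Perm.inv_def, Equiv.symm_apply_apply]
      have hrinv : Function.RightInverse gl fl := by
        intro x
        apply Sum.inl_injective
        rw [← hfl (gl x), ← hgl x, Equiv.Perm.inv_def, Equiv.apply_symm_apply]
      have hlinv' : Function.LeftInverse gr fr := by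
        intro x
        apply Sum.inr_injective
        rw [← hgr (fr x), ← hfr x, Equiv.Perm.inv_def, Equiv.symm_apply_apply]
      have hrinv' : Function.RightInverse gr fr := by
        intro x
        apply Sum.inr_injective
        rw [← hfr (gr x), ← hgr x, Equiv.Perm.inv_def, Equiv.apply_symm_apply]
      refine ⟨⟨fl, gl, hlinv, hrinv⟩, ?_, ⟨fr, gr, hlinv', hrinv'⟩, ?_, ?_⟩
      · -- fl ∈ setAutGroup S
        intro α hαS a
        have hcell : cellSum α {∅} ∈ directSum S S' := ⟨α, hαS, {∅}, hmemS0', rfl⟩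
        have himg : ⇑g '' (usum a ∅) = usum (fl '' a) ∅ := by
          ext z
          constructor
          · rintro ⟨w, hw, rfl⟩
            rcases hw with ⟨v, hv, rfl⟩ | ⟨v, hv, rfl⟩
            · rw [hfl v]
              exact Or.inl ⟨fl v, ⟨v, hv, rfl⟩, rfl⟩
            · exact absurd hv (Set.notMem_empty v)
          · rintro (⟨w, ⟨v, hv, rfl⟩, rfl⟩ | ⟨w, hw, rfl⟩)
            · exact ⟨Sum.inl v, Or.inl ⟨v, hv, rfl⟩, hfl v⟩
            · exact absurd hw (Set.notMem_empty w)
        have m1 : ∀ b : Set Ω, usum b (∅ : Set Ω') ∈ cellSum α {∅} ↔ b ∈ α := by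
          intro b
          rw [mem_cellSum_iff, preimage_inl_usum, preimage_inr_usum]
          simp
        have key := hgm _ hcell (usum a ∅)
        rw [himg, m1, m1] at key
        exact key
      · -- fr ∈ setAutGroup S'
        intro α' hα'S a'
        have hcell : cellSum {∅} α' ∈ directSum S S' := ⟨{∅}, hmemS0, α', hα'S, rfl⟩
        have himg : ⇑g '' (usum ∅ a') = usum ∅ (fr '' a') := by
          ext z
          constructor
          · rintro ⟨w, hw, rfl⟩
            rcases hw with ⟨v, hv, rfl⟩ | ⟨v, hv, rfl⟩
            · exact absurd hv (Set.notMem_empty v)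
            · rw [hfr v]
              exact Or.inr ⟨fr v, ⟨v, hv, rfl⟩, rfl⟩
          · rintro (⟨w, hw, rfl⟩ | ⟨w, ⟨v, hv, rfl⟩, rfl⟩)
            · exact absurd hw (Set.notMem_empty w)
            · exact ⟨Sum.inr v, Or.inr ⟨v, hv, rfl⟩, hfr v⟩
        have m1 : ∀ b : Set Ω', usum (∅ : Set Ω) b ∈ cellSum {∅} α' ↔ b ∈ α' := by
          intro b
          rw [mem_cellSum_iff, preimage_inl_usum, preimage_inr_usum]
          simp
        have key := hgm _ hcell (usum ∅ a')
        rw [himg, m1, m1] at key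
        exact key
      · -- g = sumCongr
        ext z
        cases z with
        | inl x => rw [hfl x]; rfl
        | inr x => rw [hfr x]; rfl
    · rintro ⟨f, hf, f', hf', rfl⟩
      intro cell hcell s
      obtain ⟨α, hα, α', hα', rfl⟩ := hcell
      have hfm : ∀ β ∈ S, ∀ b : Set Ω, b ∈ β ↔ ⇑f '' b ∈ β := hf
      have hfm' : ∀ β ∈ S', ∀ b : Set Ω', b ∈ β ↔ ⇑f' '' b ∈ β := hf'
      rw [mem_cellSum_iff, mem_cellSum_iff]
      have h1 : Sum.inl ⁻¹' (⇑(Equiv.sumCongr f f') '' s) = ⇑f '' (Sum.inl ⁻¹' s) := by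
        ext x
        constructor
        · rintro ⟨z, hz, he⟩
          cases z with
          | inl v =>
            refine ⟨v, hz, ?_⟩
            have : Sum.inl (f v) = Sum.inl x := he
            exact Sum.inl_injective this
          | inr v => exact absurd he (by simp)
        · rintro ⟨v, hv, rfl⟩
          exact ⟨Sum.inl v, hv, rfl⟩
      have h2 : Sum.inr ⁻¹' (⇑(Equiv.sumCongr f f') '' s) = ⇑f' '' (Sum.inr ⁻¹' s) := by
        ext x
        constructor
        · rintro ⟨z, hz, he⟩
          cases z with
          | inl v => exact absurd he (by simp)
          | inr v =>
            refine ⟨v, hz, ?_⟩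
            have : Sum.inr (f' v) = Sum.inr x := he
            exact Sum.inr_injective this
        · rintro ⟨v, hv, rfl⟩
          exact ⟨Sum.inr v, hv, rfl⟩
      rw [h1, h2]
      exact and_congr (hfm α hα _) (hfm' α' hα' _)

end Paper
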